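/- Let ξ ∈ (0,1) and η ∈ (ξ,1) be fixed, and assume x ≥ (1 − η²ξ)/(ξ(1−η)²). Let d be the smallest index with a_d ≤ ξx (so {(a_i,b_i] : i = 0,…,d} is the η-covering of (ξx, x]). Then d ≤ ⌈(log ξ)/(log η)⌉. -/

import Mathlib

open Filter Topology

/-- `seqB η x i = f^i(⌈x⌉)` where `f(y) = ⌈η y⌉`. -/
noncomputable def seqB (η x : ℝ) (i : ℕ) : ℝ :=
  (fun y : ℝ => ((⌈η * y⌉ : ℤ) : ℝ))^[i] ((⌈x⌉ : ℤ) : ℝ)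

/-- `seqA η x i = η * seqB η x i`. -/
noncomputable def seqA (η x : ℝ) (i : ℕ) : ℝ := η * seqB η x i

theorem stmt_15 (ξ η x : ℝ) (hξ : ξ ∈ Set.Ioo (0 : ℝ) 1) (hη : η ∈ Set.Ioo ξ 1)
    (hx : (1 - η ^ 2 * ξ) / (ξ * (1 - η) ^ 2) ≤ x)
    (d : ℕ) (hd1 : seqA η x d ≤ ξ * x) (hd2 : ∀ i : ℕ, i < d → ξ * x < seqA η x i) :
    (d : ℤ) ≤ ⌈Real.log ξ / Real.log η⌉ := by
  obtain ⟨hξ0, hξ1⟩ := hξ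
  obtain ⟨hηξ, hη1⟩ := hη
  have hη0 : 0 < η := hξ0.trans hηξ
  have h1η : 0 < 1 - η := by linarith
  by_contra hcon
  push_neg at hcon
  set D : ℤ := ⌈Real.log ξ / Real.log η⌉ with hD
  have hlogη : Real.log η < 0 := Real.log_neg hη0 hη1
  have hlogξ : Real.log ξ < 0 := Real.log_neg hξ0 hξ1
  have hratio : 0 < Real.log ξ / Real.log η := div_pos_of_neg_of_neg hlogξ hlogη
  have hD0 : 0 < D := Int.ceil_pos.mpr hratio
  set N : ℕ := D.toNat with hNdef
  have hND : (N : ℤ) = D := Int.toNat_of_nonneg hD0.le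
  have hNd : N < d := by
    have : (N : ℤ) < (d : ℤ) := by rw [hND]; exact hcon
    exact_mod_cast this
  have hlt := hd2 N hNd
  -- η ^ N ≤ ξ
  have hηN : η ^ N ≤ ξ := by
    have hNge : Real.log ξ / Real.log η ≤ (N : ℝ) := by
      rw [show ((N : ℝ)) = ((N : ℤ) : ℝ) by norm_cast, hND]
      exact Int.le_ceil _
    have h2 : (N : ℝ) * Real.log η ≤ Real.log ξ := (div_le_iff_of_neg hlogη).mp hNge
    have h3 : Real.log (η ^ N) ≤ Real.log ξ := by rw [Real.log_pow]; exact_mod_cast h2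
    exact (Real.log_le_log_iff (pow_pos hη0 N) hξ0).mp h3
  -- key bound on seqB
  have key : ∀ i, seqB η x i < η ^ i * (x - η / (1 - η)) + 1 / (1 - η) := by
    intro i
    induction i with
    | zero =>
      have h1 : ((⌈x⌉ : ℤ) : ℝ) < x + 1 := Int.ceil_lt_add_one x
      have h2 : x - η / (1 - η) + 1 / (1 - η) = x + 1 := by field_simp; ring
      simp only [seqB, Function.iterate_zero, id_eq, pow_zero, one_mul]
      linarith
    | succ n ih =>
      have hB : seqB η x (n + 1) = ((⌈η * seqB η x n⌉ : ℤ) : ℝ) := by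
        simp [seqB, Function.iterate_succ_apply']
      rw [hB]
      have h1 : ((⌈η * seqB η x n⌉ : ℤ) : ℝ) < η * seqB η x n + 1 := Int.ceil_lt_add_one _
      have h2 : η * seqB η x n < η * (η ^ n * (x - η / (1 - η)) + 1 / (1 - η)) :=
        mul_lt_mul_of_pos_left ih hη0
      have h3 : η * (1 / (1 - η)) + 1 = 1 / (1 - η) := by field_simp; ring
      calc ((⌈η * seqB η x n⌉ : ℤ) : ℝ) < η * seqB η x n + 1 := h1
        _ < η * (η ^ n * (x - η / (1 - η)) + 1 / (1 - η)) + 1 := by linarith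
        _ = η ^ (n + 1) * (x - η / (1 - η)) + (η * (1 / (1 - η)) + 1) := by ring
        _ = η ^ (n + 1) * (x - η / (1 - η)) + 1 / (1 - η) := by rw [h3]
  -- now derive contradiction
  have hx' : 1 - η ^ 2 * ξ ≤ x * (ξ * (1 - η) ^ 2) := by
    have hden : 0 < ξ * (1 - η) ^ 2 := by positivity
    calc 1 - η ^ 2 * ξ = (1 - η ^ 2 * ξ) / (ξ * (1 - η) ^ 2) * (ξ * (1 - η) ^ 2) := by
          field_simp
      _ ≤ x * (ξ * (1 - η) ^ 2) := by
          exact mul_le_mul_of_nonneg_right hx hden.le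
  have hC : 0 ≤ x - η / (1 - η) := by
    rw [sub_nonneg, div_le_iff₀ h1η]
    nlinarith [hx', mul_pos hξ0 h1η, mul_pos hξ0 hη0]
  have hkey := key N
  have hA : seqA η x N < η * (η ^ N * (x - η / (1 - η)) + 1 / (1 - η)) := by
    unfold seqA
    exact mul_lt_mul_of_pos_left hkey hη0
  have hstep : η * (η ^ N * (x - η / (1 - η)) + 1 / (1 - η)) ≤ ξ * x := by
    have h5 : η ^ N * (x - η / (1 - η)) ≤ ξ * (x - η / (1 - η)) :=
      mul_le_mul_of_nonneg_right hηN hC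
    have h6 : η * (η ^ N * (x - η / (1 - η)) + 1 / (1 - η)) ≤
        η * (ξ * (x - η / (1 - η)) + 1 / (1 - η)) := by nlinarith
    have heq : η * (ξ * (x - η / (1 - η)) + 1 / (1 - η)) =
        ξ * η * x + (η - η ^ 2 * ξ) / (1 - η) := by field_simp; ring
    have h8 : (η - η ^ 2 * ξ) / (1 - η) ≤ ξ * x * (1 - η) := by
      rw [div_le_iff₀ h1η]; nlinarith [hx']
    nlinarith [heq, h8]
  linarith
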